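/- Let G = ⟨R_r, R_r^π⟩ (two regular dihedral groups of squarefree order on Ω). Suppose H₁ is a cyclic subgroup of odd order of R_r. Then H₁ has the same orbits on Ω as some subgroup H₂ ≤ R_r^π if and only if the orbits of H₁ form a G-invariant partition of Ω. -/

import Mathlib

open Subgroup

/-- An odd-order subgroup of a group isomorphic to a dihedral group is
closed under conjugation by arbitrary elements of the ambient group. -/
lemma aux_conj_mem_of_odd {G : Type*} [Group G] {k : ℕ} {R H : Subgroup G} (hHR : H ≤ R)
    (e : R ≃* DihedralGroup k) (hodd : Odd (Nat.card H)) :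
    ∀ g ∈ R, ∀ h ∈ H, g * h * g⁻¹ ∈ H := by
  set H' : Subgroup (DihedralGroup k) := (H.subgroupOf R).map e.toMonoidHom with hH'
  have hcard : Nat.card H' = Nat.card H := by
    have e1 : H.subgroupOf R ≃* H := Subgroup.subgroupOfEquivOfLe hHR
    have e2 : H.subgroupOf R ≃* H' :=
      Subgroup.equivMapOfInjective _ _ e.injective
    rw [← Nat.card_congr e2.toEquiv, Nat.card_congr e1.toEquiv]
  -- every element of H' is a rotation
  have hrot : ∀ a ∈ H', ∃ i : ZMod k, a = DihedralGroup.r i := by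
    intro a ha
    cases a with
    | r i => exact ⟨i, rfl⟩
    | sr i =>
      exfalso
      have h2 : orderOf (⟨DihedralGroup.sr i, ha⟩ : H') = 2 := by
        rw [← orderOf_submonoid]  -- may need different name
        exact DihedralGroup.orderOf_sr i
      have hdvd : orderOf (⟨DihedralGroup.sr i, ha⟩ : H') ∣ Nat.card H' :=
        orderOf_dvd_natCard _
      rw [h2, hcard] at hdvd
      rw [Nat.odd_iff] at hodd
      omega
  -- H' is closed under conjugation in the dihedral group
  have hconj : ∀ a ∈ H', ∀ g : DihedralGroup k, g * a * g⁻¹ ∈ H' := by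
    intro a ha g
    obtain ⟨i, rfl⟩ := hrot a ha
    have hrinv : ∀ j : ZMod k, (DihedralGroup.r j)⁻¹ = DihedralGroup.r (-j) := by
      intro j
      refine inv_eq_of_mul_eq_one_right ?_
      rw [DihedralGroup.r_mul_r, add_neg_cancel, ← DihedralGroup.one_def]
    cases g with
    | r j =>
      have : DihedralGroup.r j * DihedralGroup.r i * (DihedralGroup.r j)⁻¹
          = DihedralGroup.r i := by
        rw [hrinv, DihedralGroup.r_mul_r, DihedralGroup.r_mul_r]
        ring_nf
      rw [this]; exact ha
    | sr j =>
      have hsinv : (DihedralGroup.sr j)⁻¹ = DihedralGroup.sr j :=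
        inv_eq_of_mul_eq_one_right (DihedralGroup.sr_mul_self j)
      have : DihedralGroup.sr j * DihedralGroup.r i * (DihedralGroup.sr j)⁻¹
          = (DihedralGroup.r i)⁻¹ := by
        rw [hsinv, DihedralGroup.sr_mul_r, DihedralGroup.sr_mul_sr, hrinv]
        ring_nf
      rw [this]; exact H'.inv_mem ha
  intro g hg h hh
  have hmem : e ⟨g, hg⟩ * e ⟨h, hHR hh⟩ * (e ⟨g, hg⟩)⁻¹ ∈ H' := by
    apply hconj
    exact ⟨⟨h, hHR hh⟩, hh, rfl⟩
  rw [← map_inv, ← map_mul, ← map_mul] at hmem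
  obtain ⟨b, hb, heq⟩ := hmem
  have : b = ⟨g, hg⟩ * ⟨h, hHR hh⟩ * ⟨g, hg⟩⁻¹ := e.injective heq
  subst this
  exact hb

section Aux

variable {Ω : Type*}

/-- The orbit of a point under a subgroup of the permutation group. -/
def auxOrb (H : Subgroup (Equiv.Perm Ω)) (x : Ω) : Set Ω := {y | ∃ h ∈ H, h x = y}

lemma auxOrb_mem_self (H : Subgroup (Equiv.Perm Ω)) (x : Ω) : x ∈ auxOrb H x :=
  ⟨1, H.one_mem, rfl⟩

lemma auxOrb_eq_of_mem {H : Subgroup (Equiv.Perm Ω)} {x y : Ω} (hy : y ∈ auxOrb H x) :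
    auxOrb H y = auxOrb H x := by
  obtain ⟨h', hh', rfl⟩ := hy
  ext z
  constructor
  · rintro ⟨h, hh, rfl⟩
    exact ⟨h * h', H.mul_mem hh hh', rfl⟩
  · rintro ⟨h, hh, rfl⟩
    refine ⟨h * h'⁻¹, H.mul_mem hh (H.inv_mem hh'), ?_⟩
    simp [Equiv.Perm.mul_apply]
  ;

/-- Semiregularity: in a regular group, elements agreeing at a point are equal. -/
lemma aux_eq_of_reg {R : Subgroup (Equiv.Perm Ω)}
    (reg : ∀ x y : Ω, ∃! g : R, (g : Equiv.Perm Ω) x = y)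
    {g g' : Equiv.Perm Ω} (hg : g ∈ R) (hg' : g' ∈ R) {x : Ω} (h : g x = g' x) : g = g' := by
  obtain ⟨u, -, huniq⟩ := reg x (g x)
  have h1 := huniq ⟨g, hg⟩ rfl
  have h2 := huniq ⟨g', hg'⟩ h.symm
  have := h1.trans h2.symm
  exact Subtype.ext_iff.mp this

lemma aux_card_orb {R H : Subgroup (Equiv.Perm Ω)}
    (reg : ∀ x y : Ω, ∃! g : R, (g : Equiv.Perm Ω) x = y)
    (hHR : H ≤ R) (x : Ω) : Nat.card (auxOrb H x) = Nat.card H := by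
  refine (Nat.card_eq_of_bijective (fun h : H => (⟨(h : Equiv.Perm Ω) x, h, h.2, rfl⟩ : auxOrb H x)) ⟨?_, ?_⟩).symm
  · intro a b hab
    have : (a : Equiv.Perm Ω) x = (b : Equiv.Perm Ω) x := congrArg Subtype.val hab
    exact Subtype.ext (aux_eq_of_reg reg (hHR a.2) (hHR b.2) this)
  · rintro ⟨y, h, hh, rfl⟩
    exact ⟨⟨h, hh⟩, rfl⟩

/-- If `H` is closed under conjugation by elements of `R`, then `R` permutes the orbits of `H`. -/
lemma aux_image_orb {R H : Subgroup (Equiv.Perm Ω)}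
    (hc : ∀ g ∈ R, ∀ h ∈ H, g * h * g⁻¹ ∈ H) {g : Equiv.Perm Ω} (hg : g ∈ R) (x : Ω) :
    g '' auxOrb H x = auxOrb H (g x) := by
  ext y
  constructor
  · rintro ⟨w, ⟨h, hh, rfl⟩, rfl⟩
    refine ⟨g * h * g⁻¹, hc g hg h hh, ?_⟩
    simp [Equiv.Perm.mul_apply]
  · rintro ⟨h, hh, rfl⟩
    refine ⟨(g⁻¹ * h * g) x, ⟨g⁻¹ * h * g, ?_, rfl⟩, ?_⟩
    · have := hc g⁻¹ (R.inv_mem hg) h hh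
      simpa using this
    · simp [Equiv.Perm.mul_apply]

end Aux



/-- A pair of regular dihedral permutation groups of squarefree order 2k on Ω
whose cyclic index-2 halves share the same two orbits F₁, F₂. -/
structure DihedralPairSetup (Ω : Type*) where
  R₁ : Subgroup (Equiv.Perm Ω)
  R₂ : Subgroup (Equiv.Perm Ω)
  C₁ : Subgroup (Equiv.Perm Ω)
  C₂ : Subgroup (Equiv.Perm Ω)
  F₁ : Set Ω
  F₂ : Set Ω
  k : ℕ
  k_odd : Odd k
  k_squarefree : Squarefree k
  k_ge : 3 ≤ k
  card_eq : Nat.card Ω = 2 * k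
  dih₁ : Nonempty (R₁ ≃* DihedralGroup k)
  dih₂ : Nonempty (R₂ ≃* DihedralGroup k)
  reg₁ : ∀ x y : Ω, ∃! g : R₁, (g : Equiv.Perm Ω) x = y
  reg₂ : ∀ x y : Ω, ∃! g : R₂, (g : Equiv.Perm Ω) x = y
  hC₁ : C₁ ≤ R₁
  hC₂ : C₂ ≤ R₂
  cyc₁ : IsCyclic C₁
  cyc₂ : IsCyclic C₂
  idx₁ : C₁.relIndex R₁ = 2
  idx₂ : C₂.relIndex R₂ = 2
  union_eq : F₁ ∪ F₂ = Set.univ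
  disj : Disjoint F₁ F₂
  ne₁ : F₁.Nonempty
  ne₂ : F₂.Nonempty
  orb₁ : ∀ x ∈ F₁, F₁ = {y : Ω | ∃ g ∈ C₁, g x = y}
  orb₁' : ∀ x ∈ F₂, F₂ = {y : Ω | ∃ g ∈ C₁, g x = y}
  orb₂ : ∀ x ∈ F₁, F₁ = {y : Ω | ∃ g ∈ C₂, g x = y}
  orb₂' : ∀ x ∈ F₂, F₂ = {y : Ω | ∃ g ∈ C₂, g x = y}

/-- A cyclic subgroup H₁ ≤ R_r of odd order has the same orbits as some
subgroup H₂ ≤ R_r^π if and only if the orbits of H₁ form a G-invariant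
partition of Ω. -/
theorem stmt_17 {Ω : Type*} [Fintype Ω] (S : DihedralPairSetup Ω)
    (G : Subgroup (Equiv.Perm Ω)) (hG : G = S.R₁ ⊔ S.R₂)
    (H₁ : Subgroup (Equiv.Perm Ω)) (hH₁ : H₁ ≤ S.R₁)
    (hcyc : IsCyclic H₁) (hodd : Odd (Nat.card H₁)) :
    (∃ H₂ : Subgroup (Equiv.Perm Ω), H₂ ≤ S.R₂ ∧
        ∀ x y : Ω, (∃ h ∈ H₁, h x = y) ↔ (∃ h ∈ H₂, h x = y)) ↔
    (∀ g ∈ G, ∀ x : Ω, ∃ z : Ω,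
        (⇑g) '' {y : Ω | ∃ h ∈ H₁, h x = y} = {y : Ω | ∃ h ∈ H₁, h z = y}) := by
  have hsets : ∀ (H : Subgroup (Equiv.Perm Ω)) (x : Ω),
      {y : Ω | ∃ h ∈ H, h x = y} = auxOrb H x := fun _ _ => rfl
  simp only [hsets]
  have hΩ : Nonempty Ω := by
    have h1 := S.card_eq
    have h2 := S.k_ge
    have : 0 < Nat.card Ω := by omega
    exact (Nat.card_pos_iff.mp this).1
  obtain ⟨e₁⟩ := S.dih₁
  obtain ⟨e₂⟩ := S.dih₂
  have hinvimg : ∀ (p : Equiv.Perm Ω) (s : Set Ω), ⇑(p⁻¹) '' (⇑p '' s) = s := by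
    intro p s
    rw [← Set.image_comp]
    simp [Set.image_id']
  constructor
  · rintro ⟨H₂, hH₂R, hsame⟩
    have horbeq : ∀ x, auxOrb H₁ x = auxOrb H₂ x := by
      intro x; ext y; exact hsame x y
    have x₀ : Ω := Classical.arbitrary Ω
    have hcard₂ : Nat.card H₂ = Nat.card H₁ := by
      rw [← aux_card_orb S.reg₂ hH₂R x₀, ← horbeq x₀, aux_card_orb S.reg₁ hH₁ x₀]
    have hn₁ := aux_conj_mem_of_odd hH₁ e₁ hodd
    have hn₂ := aux_conj_mem_of_odd hH₂R e₂ (hcard₂ ▸ hodd)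
    have key : ∀ g ∈ G, ∀ x, g '' auxOrb H₁ x = auxOrb H₁ (g x) := by
      rw [hG]
      have hcl : S.R₁ ⊔ S.R₂
          = Subgroup.closure ((S.R₁ : Set (Equiv.Perm Ω)) ∪ (S.R₂ : Set (Equiv.Perm Ω))) := by
        rw [Subgroup.closure_union, Subgroup.closure_eq, Subgroup.closure_eq]
      rw [hcl]
      intro g hg
      induction hg using Subgroup.closure_induction with
      | mem s hs =>
        rcases hs with hs | hs
        · exact fun x => aux_image_orb hn₁ hs x
        · intro x
          rw [horbeq x, horbeq (s x)]
          exact aux_image_orb hn₂ hs x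
      | one => intro x; simp
      | mul a b ha hb iha ihb =>
        intro x
        rw [Equiv.Perm.coe_mul, Set.image_comp, ihb x, iha (b x)]
        rfl
      | inv a ha iha =>
        intro x
        have := iha (a⁻¹ x)
        rw [show a (a⁻¹ x) = x from a.apply_symm_apply x] at this
        rw [← this, hinvimg]
    intro g hg x
    exact ⟨g x, key g hg x⟩
  · intro hinv
    have hinv₂ : ∀ g ∈ S.R₂, ∀ x, g '' auxOrb H₁ x = auxOrb H₁ (g x) := by
      intro g hg x
      have hgG : g ∈ G := by rw [hG]; exact le_sup_right (α := Subgroup (Equiv.Perm Ω)) hg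
      obtain ⟨z, hz⟩ := hinv g hgG x
      have hgx : g x ∈ auxOrb H₁ z := by
        rw [← hz]; exact ⟨x, auxOrb_mem_self H₁ x, rfl⟩
      rw [hz]
      exact (auxOrb_eq_of_mem hgx).symm
    -- key: a block stabilizer element stabilizes every block
    have hkey : ∀ x : Ω, ∀ g ∈ S.R₂, g x ∈ auxOrb H₁ x → ∀ w, g w ∈ auxOrb H₁ w := by
      intro x g hg hgx w
      set K : Subgroup (Equiv.Perm Ω) :=
        { carrier := {g : Equiv.Perm Ω | g ∈ S.R₂ ∧ g x ∈ auxOrb H₁ x}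
          one_mem' := ⟨S.R₂.one_mem, by simpa using auxOrb_mem_self H₁ x⟩
          mul_mem' := by
            rintro a b ⟨haR, hax⟩ ⟨hbR, hbx⟩
            refine ⟨S.R₂.mul_mem haR hbR, ?_⟩
            have h1 : a (b x) ∈ a '' auxOrb H₁ x := ⟨b x, hbx, rfl⟩
            rw [hinv₂ a haR x, auxOrb_eq_of_mem hax] at h1
            simpa [Equiv.Perm.mul_apply] using h1
          inv_mem' := by
            rintro a ⟨haR, hax⟩
            refine ⟨S.R₂.inv_mem haR, ?_⟩
            have hx' : x ∈ auxOrb H₁ (a x) := by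
              rw [auxOrb_eq_of_mem hax]; exact auxOrb_mem_self H₁ x
            have h1 : a⁻¹ x ∈ ⇑(a⁻¹) '' auxOrb H₁ (a x) := ⟨x, hx', rfl⟩
            rw [hinv₂ a⁻¹ (S.R₂.inv_mem haR) (a x), show a⁻¹ (a x) = x from a.symm_apply_apply x] at h1
            exact h1 } with hK
      have hKR : K ≤ S.R₂ := fun _ h => h.1
      have hKcard : Nat.card K = Nat.card H₁ := by
        rw [← aux_card_orb S.reg₁ hH₁ x]
        refine Nat.card_eq_of_bijective
          (fun g : K => (⟨(g : Equiv.Perm Ω) x, g.2.2⟩ : auxOrb H₁ x)) ⟨?_, ?_⟩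
        · intro a b hab
          have : (a : Equiv.Perm Ω) x = (b : Equiv.Perm Ω) x := congrArg Subtype.val hab
          exact Subtype.ext (aux_eq_of_reg S.reg₂ (hKR a.2) (hKR b.2) this)
        · rintro ⟨y, hy⟩
          obtain ⟨u, hux, -⟩ := S.reg₂ x y
          refine ⟨⟨(u : Equiv.Perm Ω), u.2, ?_⟩, Subtype.ext hux⟩
          rw [hux]; exact hy
      have hKn := aux_conj_mem_of_odd hKR e₂ (hKcard ▸ hodd)
      obtain ⟨a, hax, -⟩ := S.reg₂ x w
      have hconj : (a : Equiv.Perm Ω)⁻¹ * g * (a : Equiv.Perm Ω) ∈ K := by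
        have := hKn (a : Equiv.Perm Ω)⁻¹ (S.R₂.inv_mem a.2) g ⟨hg, hgx⟩
        rwa [inv_inv] at this
      have hcx : ((a : Equiv.Perm Ω)⁻¹ * g * (a : Equiv.Perm Ω)) x ∈ auxOrb H₁ x := hconj.2
      have h1 : (a : Equiv.Perm Ω) (((a : Equiv.Perm Ω)⁻¹ * g * (a : Equiv.Perm Ω)) x)
          ∈ (a : Equiv.Perm Ω) '' auxOrb H₁ x := ⟨_, hcx, rfl⟩
      rw [hinv₂ (a : Equiv.Perm Ω) a.2 x, hax] at h1
      simpa [Equiv.Perm.mul_apply, hax] using h1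
    refine ⟨{ carrier := {g : Equiv.Perm Ω | g ∈ S.R₂ ∧ ∀ w, g w ∈ auxOrb H₁ w}
              one_mem' := ⟨S.R₂.one_mem, fun w => by simpa using auxOrb_mem_self H₁ w⟩
              mul_mem' := by
                rintro a b ⟨haR, hax⟩ ⟨hbR, hbx⟩
                refine ⟨S.R₂.mul_mem haR hbR, fun w => ?_⟩
                have h1 : a (b w) ∈ a '' auxOrb H₁ w := ⟨b w, hbx w, rfl⟩
                rw [hinv₂ a haR w, auxOrb_eq_of_mem (hax w)] at h1
                simpa [Equiv.Perm.mul_apply] using h1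
              inv_mem' := by
                rintro a ⟨haR, hax⟩
                refine ⟨S.R₂.inv_mem haR, fun w => ?_⟩
                have hx' : w ∈ auxOrb H₁ (a w) := by
                  rw [auxOrb_eq_of_mem (hax w)]; exact auxOrb_mem_self H₁ w
                have h1 : a⁻¹ w ∈ ⇑(a⁻¹) '' auxOrb H₁ (a w) := ⟨w, hx', rfl⟩
                rw [hinv₂ a⁻¹ (S.R₂.inv_mem haR) (a w), show a⁻¹ (a w) = w from a.symm_apply_apply w] at h1
                exact h1 }, fun _ h => h.1, ?_⟩
    intro x y
    constructor
    · rintro ⟨h, hh, rfl⟩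
      obtain ⟨u, hux, -⟩ := S.reg₂ x (h x)
      have huK : ∀ w, (u : Equiv.Perm Ω) w ∈ auxOrb H₁ w := by
        refine hkey x (u : Equiv.Perm Ω) u.2 ?_
        rw [hux]; exact ⟨h, hh, rfl⟩
      exact ⟨(u : Equiv.Perm Ω), ⟨u.2, huK⟩, hux⟩
    · rintro ⟨h, hh, rfl⟩
      exact hh.2 x
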